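/- The coarsened model is a relaxation of the original model: for every feasible allocation (s,d,f,ξ,y) ∈ 𝓕 of the original supply chain model, the aggregated tuple (s,d,f̂,ξ,y), where f̂_k = Σ_{ℓ ∈ class k} f_ℓ for each global-edge class k ∈ 𝒦, belongs to the coarse feasible set 𝓕̄. -/
import Mathlib


open Finset

/-- A multi-product supply chain model with nodes `N`, products `P`,
suppliers `S`, consumers `D`, transport edges `L`, and technologies `T`. -/
structure SupplyChain (N P S D L T : Type) where
  /-- node of supplier `i` -/
  nS : S → N
  /-- product of supplier `i` -/
  pS : S → P
  /-- supply capacity `s̄ᵢ` -/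
  sBar : S → ℝ
  /-- supply cost `αˢᵢ` -/
  alphaS : S → ℝ
  /-- node of consumer `j` -/
  nD : D → N
  /-- product of consumer `j` -/
  pD : D → P
  /-- demand capacity `d̄ⱼ` -/
  dBar : D → ℝ
  /-- demand price `α^d_j` -/
  alphaD : D → ℝ
  /-- sending node `n_s(ℓ)` -/
  nsend : L → N
  /-- receiving node `n_r(ℓ)` -/
  nrecv : L → N
  /-- product transported `p(ℓ)` -/
  pL : L → P
  /-- flow capacity `f̄_ℓ` -/
  fBar : L → ℝ
  /-- transport cost `α^f_ℓ` -/
  alphaF : L → ℝ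
  /-- node of technology `t` -/
  nT : T → N
  /-- yield factors `γ_{t,p}` -/
  gamma : T → P → ℝ
  /-- per-facility processing capacity `ξ̄_t` -/
  xiBar : T → ℝ
  /-- maximum number of facilities `ȳ_t` -/
  yBar : T → ℕ
  /-- operating cost `α^ξ_t` -/
  alphaXi : T → ℝ
  /-- installation cost `α^y_t` -/
  alphaY : T → ℝ
  sBar_nonneg : ∀ i, 0 ≤ sBar i
  alphaS_nonneg : ∀ i, 0 ≤ alphaS i
  dBar_nonneg : ∀ j, 0 ≤ dBar j
  alphaD_nonneg : ∀ j, 0 ≤ alphaD j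
  fBar_nonneg : ∀ l, 0 ≤ fBar l
  alphaF_nonneg : ∀ l, 0 ≤ alphaF l
  xiBar_nonneg : ∀ t, 0 ≤ xiBar t
  alphaXi_nonneg : ∀ t, 0 ≤ alphaXi t
  alphaY_nonneg : ∀ t, 0 ≤ alphaY t

/-- An allocation `x = (s, d, f, ξ, y)`. -/
abbrev Alloc (S D L T : Type) : Type :=
  (S → ℝ) × (D → ℝ) × (L → ℝ) × (T → ℝ) × (T → ℤ)

variable {N P S D L T : Type} [Fintype N] [Fintype P] [Fintype S] [Fintype D]
  [Fintype L] [Fintype T] [DecidableEq N] [DecidableEq P]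

/-- The feasible set `𝓕` of the supply chain model. -/
def Feasible (sc : SupplyChain N P S D L T) : Set (Alloc S D L T) :=
  { x | (∀ (n : N) (p : P),
        (∑ i ∈ univ.filter (fun i => sc.nS i = n ∧ sc.pS i = p), x.1 i)
        + (∑ l ∈ univ.filter (fun l => sc.nrecv l = n ∧ sc.pL l = p), x.2.2.1 l)
        - (∑ j ∈ univ.filter (fun j => sc.nD j = n ∧ sc.pD j = p), x.2.1 j)
        - (∑ l ∈ univ.filter (fun l => sc.nsend l = n ∧ sc.pL l = p), x.2.2.1 l)
        + (∑ t ∈ univ.filter (fun t => sc.nT t = n), sc.gamma t p * x.2.2.2.1 t) = 0)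
      ∧ (∀ j, 0 ≤ x.2.1 j ∧ x.2.1 j ≤ sc.dBar j)
      ∧ (∀ i, 0 ≤ x.1 i ∧ x.1 i ≤ sc.sBar i)
      ∧ (∀ l, 0 ≤ x.2.2.1 l ∧ x.2.2.1 l ≤ sc.fBar l)
      ∧ (∀ t, 0 ≤ x.2.2.2.2 t ∧ x.2.2.2.2 t ≤ (sc.yBar t : ℤ))
      ∧ (∀ t, 0 ≤ x.2.2.2.1 t ∧ x.2.2.2.1 t ≤ (x.2.2.2.2 t : ℝ) * sc.xiBar t) }

/-- The total welfare `φ(x)`. -/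
def welfare (sc : SupplyChain N P S D L T) (x : Alloc S D L T) : ℝ :=
  (∑ j, sc.alphaD j * x.2.1 j) - (∑ i, sc.alphaS i * x.1 i)
    - (∑ l, sc.alphaF l * x.2.2.1 l) - (∑ t, sc.alphaXi t * x.2.2.2.1 t)
    - (∑ t, sc.alphaY t * (x.2.2.2.2 t : ℝ))

/-- The optimal welfare `φ* = sup_{x ∈ 𝓕} φ(x)`. -/
noncomputable def phiStar (sc : SupplyChain N P S D L T) : ℝ :=
  sSup (welfare sc '' Feasible sc)

/-- The sampled feasible set `𝓕̲(ℒ_a)`. -/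
def SampledFeasible (sc : SupplyChain N P S D L T) (La : Set L) : Set (Alloc S D L T) :=
  { x ∈ Feasible sc | ∀ l, l ∉ La → x.2.2.1 l = 0 }

/-- The sampled optimal welfare `φ̲*(ℒ_a)`. -/
noncomputable def phiLower (sc : SupplyChain N P S D L T) (La : Set L) : ℝ :=
  sSup (welfare sc '' SampledFeasible sc La)

/-- Graph-coarsening data: a partition map `c : 𝒩 → 𝒞` on nodes together with a
grouping of the global edges into classes indexed by `𝒦`. An edge `ℓ` is local if
`c(n_s(ℓ)) = c(n_r(ℓ))` and global otherwise; each class `k ∈ 𝒦` has a sending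
partition `cs k`, a receiving partition `cr k` with `cs k ≠ cr k`, and a product
`pK k`, and consists of all global edges `ℓ` with `c(n_s(ℓ)) = cs k`,
`c(n_r(ℓ)) = cr k` and `p(ℓ) = pK k`; every global edge lies in exactly one class. -/
structure Coarsening (sc : SupplyChain N P S D L T) (C K : Type) where
  /-- the partition map `c : 𝒩 → 𝒞` -/
  part : N → C
  /-- the sending partition `c_s(k)` of class `k` -/
  cs : K → C
  /-- the receiving partition `c_r(k)` of class `k` -/
  cr : K → C
  /-- the product `p(k)` of class `k` -/
  pK : K → P
  cs_ne_cr : ∀ k, cs k ≠ cr k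
  unique_class : ∀ l : L, part (sc.nsend l) ≠ part (sc.nrecv l) →
    ∃! k : K, cs k = part (sc.nsend l) ∧ cr k = part (sc.nrecv l) ∧ pK k = sc.pL l

variable {C K : Type} [Fintype K] [DecidableEq C]

/-- The set of edges in global-edge class `k`. -/
def classSet (sc : SupplyChain N P S D L T) (co : Coarsening sc C K) (k : K) : Finset L :=
  univ.filter (fun l =>
    co.part (sc.nsend l) = co.cs k ∧ co.part (sc.nrecv l) = co.cr k ∧ sc.pL l = co.pK k)

/-- The aggregated flow `f̂_k = Σ_{ℓ ∈ class k} f_ℓ`. -/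
def aggFlow (sc : SupplyChain N P S D L T) (co : Coarsening sc C K) (f : L → ℝ) (k : K) : ℝ :=
  ∑ l ∈ classSet sc co k, f l

/-- The aggregated capacity `f̄̂_k = Σ_{ℓ ∈ class k} f̄_ℓ`. -/
def aggCap (sc : SupplyChain N P S D L T) (co : Coarsening sc C K) (k : K) : ℝ :=
  ∑ l ∈ classSet sc co k, sc.fBar l

/-- The aggregated cost `α̂_k = min_{ℓ ∈ class k} α^f_ℓ` (as an infimum; for a
nonempty class this is the minimum transport cost over the class). -/
noncomputable def aggCost (sc : SupplyChain N P S D L T) (co : Coarsening sc C K) (k : K) : ℝ :=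
  sInf (sc.alphaF '' (classSet sc co k : Set L))

/-- A coarse allocation `(s, d, g, ξ, y)` with one flow per global-edge class. -/
abbrev CoarseAlloc (S D K T : Type) : Type :=
  (S → ℝ) × (D → ℝ) × (K → ℝ) × (T → ℝ) × (T → ℤ)

/-- The coarse feasible set `𝓕̄`. -/
def CoarseFeasible (sc : SupplyChain N P S D L T) (co : Coarsening sc C K) :
    Set (CoarseAlloc S D K T) :=
  { x | (∀ (c₀ : C) (p : P),
        (∑ i ∈ univ.filter (fun i => co.part (sc.nS i) = c₀ ∧ sc.pS i = p), x.1 i)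
        + (∑ k ∈ univ.filter (fun k => co.cr k = c₀ ∧ co.pK k = p), x.2.2.1 k)
        - (∑ j ∈ univ.filter (fun j => co.part (sc.nD j) = c₀ ∧ sc.pD j = p), x.2.1 j)
        - (∑ k ∈ univ.filter (fun k => co.cs k = c₀ ∧ co.pK k = p), x.2.2.1 k)
        + (∑ t ∈ univ.filter (fun t => co.part (sc.nT t) = c₀), sc.gamma t p * x.2.2.2.1 t) = 0)
      ∧ (∀ j, 0 ≤ x.2.1 j ∧ x.2.1 j ≤ sc.dBar j)
      ∧ (∀ i, 0 ≤ x.1 i ∧ x.1 i ≤ sc.sBar i)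
      ∧ (∀ k, 0 ≤ x.2.2.1 k ∧ x.2.2.1 k ≤ aggCap sc co k)
      ∧ (∀ t, 0 ≤ x.2.2.2.2 t ∧ x.2.2.2.2 t ≤ (sc.yBar t : ℤ))
      ∧ (∀ t, 0 ≤ x.2.2.2.1 t ∧ x.2.2.2.1 t ≤ (x.2.2.2.2 t : ℝ) * sc.xiBar t) }

/-- The coarse welfare `φ̄(s,d,g,ξ,y)`. -/
noncomputable def coarseWelfare (sc : SupplyChain N P S D L T) (co : Coarsening sc C K)
    (x : CoarseAlloc S D K T) : ℝ :=
  (∑ j, sc.alphaD j * x.2.1 j) - (∑ i, sc.alphaS i * x.1 i)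
    - (∑ k, aggCost sc co k * x.2.2.1 k) - (∑ t, sc.alphaXi t * x.2.2.2.1 t)
    - (∑ t, sc.alphaY t * (x.2.2.2.2 t : ℝ))

/-- The coarse optimal welfare `φ̄*`. -/
noncomputable def phiUpper (sc : SupplyChain N P S D L T) (co : Coarsening sc C K) : ℝ :=
  sSup (coarseWelfare sc co '' CoarseFeasible sc co)

section Helpers

variable {ι : Type} [Fintype ι]

lemma fiber_sum (g : ι → N) (q : ι → Prop) [DecidablePred q] (part : N → C) (c₀ : C)
    (h : ι → ℝ) :
    ∑ n ∈ univ.filter (fun n => part n = c₀),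
      ∑ i ∈ univ.filter (fun i => g i = n ∧ q i), h i
    = ∑ i ∈ univ.filter (fun i => part (g i) = c₀ ∧ q i), h i := by
  classical
  have hbU : (univ.filter (fun n => part n = c₀)).biUnion
      (fun n => univ.filter (fun i => g i = n ∧ q i))
      = univ.filter (fun i => part (g i) = c₀ ∧ q i) := by
    ext i
    simp only [Finset.mem_biUnion, Finset.mem_filter, Finset.mem_univ, true_and]
    constructor
    · rintro ⟨n, hn, rfl, hq⟩; exact ⟨hn, hq⟩
    · rintro ⟨hn, hq⟩; exact ⟨g i, hn, rfl, hq⟩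
  rw [← hbU, Finset.sum_biUnion]
  intro n _ n' _ hne
  simp only [Function.onFun]
  rw [Finset.disjoint_left]
  intro i hi hi'
  simp only [Finset.mem_filter, Finset.mem_univ, true_and] at hi hi'
  exact hne (hi.1 ▸ hi'.1)

lemma fiber_sum' (g : ι → N) (part : N → C) (c₀ : C) (h : ι → ℝ) :
    ∑ n ∈ univ.filter (fun n => part n = c₀),
      ∑ i ∈ univ.filter (fun i => g i = n), h i
    = ∑ i ∈ univ.filter (fun i => part (g i) = c₀), h i := by
  classical
  have := fiber_sum g (fun _ : ι => True) part c₀ h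
  simpa using this

lemma classSet_disjoint (sc : SupplyChain N P S D L T) (co : Coarsening sc C K)
    {k k' : K} (hne : k ≠ k') : Disjoint (classSet sc co k) (classSet sc co k') := by
  classical
  rw [Finset.disjoint_left]
  intro l hl hl'
  simp only [classSet, Finset.mem_filter, Finset.mem_univ, true_and] at hl hl'
  obtain ⟨h1, h2, h3⟩ := hl
  obtain ⟨h1', h2', h3'⟩ := hl'
  have hg : co.part (sc.nsend l) ≠ co.part (sc.nrecv l) := by
    rw [h1, h2]; exact co.cs_ne_cr k
  obtain ⟨k₀, -, huniq⟩ := co.unique_class l hg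
  exact hne ((huniq k ⟨h1.symm, h2.symm, h3.symm⟩).trans
    (huniq k' ⟨h1'.symm, h2'.symm, h3'.symm⟩).symm)

lemma class_sum_recv (sc : SupplyChain N P S D L T) (co : Coarsening sc C K)
    (f : L → ℝ) (c₀ : C) (p : P) :
    ∑ k ∈ univ.filter (fun k => co.cr k = c₀ ∧ co.pK k = p), aggFlow sc co f k
    = ∑ l ∈ univ.filter (fun l => (co.part (sc.nrecv l) = c₀ ∧ sc.pL l = p) ∧
        ¬ co.part (sc.nsend l) = co.part (sc.nrecv l)), f l := by
  classical
  have hbU : (univ.filter (fun k => co.cr k = c₀ ∧ co.pK k = p)).biUnion (classSet sc co)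
      = univ.filter (fun l => (co.part (sc.nrecv l) = c₀ ∧ sc.pL l = p) ∧
        ¬ co.part (sc.nsend l) = co.part (sc.nrecv l)) := by
    ext l
    simp only [Finset.mem_biUnion, Finset.mem_filter, Finset.mem_univ, true_and, classSet]
    constructor
    · rintro ⟨k, ⟨hcr, hp⟩, hs, hr, hpl⟩
      refine ⟨⟨hr.trans hcr, hpl.trans hp⟩, ?_⟩
      rw [hs, hr]; exact co.cs_ne_cr k
    · rintro ⟨⟨hr, hp⟩, hg⟩
      obtain ⟨k, ⟨h1, h2, h3⟩, -⟩ := co.unique_class l hg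
      exact ⟨k, ⟨h2.symm ▸ hr, h3.symm ▸ hp⟩, h1.symm, h2.symm, h3.symm⟩
  rw [← hbU, Finset.sum_biUnion]
  · rfl
  · intro k _ k' _ hne
    exact classSet_disjoint sc co hne

lemma class_sum_send (sc : SupplyChain N P S D L T) (co : Coarsening sc C K)
    (f : L → ℝ) (c₀ : C) (p : P) :
    ∑ k ∈ univ.filter (fun k => co.cs k = c₀ ∧ co.pK k = p), aggFlow sc co f k
    = ∑ l ∈ univ.filter (fun l => (co.part (sc.nsend l) = c₀ ∧ sc.pL l = p) ∧
        ¬ co.part (sc.nsend l) = co.part (sc.nrecv l)), f l := by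
  classical
  have hbU : (univ.filter (fun k => co.cs k = c₀ ∧ co.pK k = p)).biUnion (classSet sc co)
      = univ.filter (fun l => (co.part (sc.nsend l) = c₀ ∧ sc.pL l = p) ∧
        ¬ co.part (sc.nsend l) = co.part (sc.nrecv l)) := by
    ext l
    simp only [Finset.mem_biUnion, Finset.mem_filter, Finset.mem_univ, true_and, classSet]
    constructor
    · rintro ⟨k, ⟨hcs, hp⟩, hs, hr, hpl⟩
      refine ⟨⟨hs.trans hcs, hpl.trans hp⟩, ?_⟩
      rw [hs, hr]; exact co.cs_ne_cr k
    · rintro ⟨⟨hs, hp⟩, hg⟩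
      obtain ⟨k, ⟨h1, h2, h3⟩, -⟩ := co.unique_class l hg
      exact ⟨k, ⟨h1.symm ▸ hs, h3.symm ▸ hp⟩, h1.symm, h2.symm, h3.symm⟩
  rw [← hbU, Finset.sum_biUnion]
  · rfl
  · intro k _ k' _ hne
    exact classSet_disjoint sc co hne

end Helpers

/-- The coarsened model is a relaxation of the original model: for every
feasible allocation `(s,d,f,ξ,y) ∈ 𝓕`, the aggregated tuple `(s,d,f̂,ξ,y)` with
`f̂_k = Σ_{ℓ ∈ class k} f_ℓ` belongs to the coarse feasible set `𝓕̄`. -/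
theorem coarse_relaxation (sc : SupplyChain N P S D L T) (co : Coarsening sc C K)
    (x : Alloc S D L T) (hx : x ∈ Feasible sc) :
    (x.1, x.2.1, aggFlow sc co x.2.2.1, x.2.2.2.1, x.2.2.2.2) ∈ CoarseFeasible sc co := by
  classical
  obtain ⟨hbal, hd, hs, hf, hy, hxi⟩ := hx
  refine ⟨?_, hd, hs, ?_, hy, hxi⟩
  · intro c₀ p
    have hb : ∑ n ∈ univ.filter (fun n => co.part n = c₀),
        ((∑ i ∈ univ.filter (fun i => sc.nS i = n ∧ sc.pS i = p), x.1 i)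
        + (∑ l ∈ univ.filter (fun l => sc.nrecv l = n ∧ sc.pL l = p), x.2.2.1 l)
        - (∑ j ∈ univ.filter (fun j => sc.nD j = n ∧ sc.pD j = p), x.2.1 j)
        - (∑ l ∈ univ.filter (fun l => sc.nsend l = n ∧ sc.pL l = p), x.2.2.1 l)
        + (∑ t ∈ univ.filter (fun t => sc.nT t = n), sc.gamma t p * x.2.2.2.1 t)) = 0 :=
      Finset.sum_eq_zero fun n _ => hbal n p
    simp only [Finset.sum_add_distrib, Finset.sum_sub_distrib] at hb
    rw [fiber_sum sc.nS (fun i => sc.pS i = p) co.part c₀,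
      fiber_sum sc.nrecv (fun l => sc.pL l = p) co.part c₀,
      fiber_sum sc.nD (fun j => sc.pD j = p) co.part c₀,
      fiber_sum sc.nsend (fun l => sc.pL l = p) co.part c₀,
      fiber_sum' sc.nT co.part c₀] at hb
    -- split flow sums into local and global parts
    have hin := Finset.sum_filter_add_sum_filter_not
      (univ.filter (fun l => co.part (sc.nrecv l) = c₀ ∧ sc.pL l = p))
      (fun l => co.part (sc.nsend l) = co.part (sc.nrecv l)) x.2.2.1
    have hout := Finset.sum_filter_add_sum_filter_not
      (univ.filter (fun l => co.part (sc.nsend l) = c₀ ∧ sc.pL l = p))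
      (fun l => co.part (sc.nsend l) = co.part (sc.nrecv l)) x.2.2.1
    rw [Finset.filter_filter, Finset.filter_filter] at hin hout
    have hloc : (univ.filter (fun l => (co.part (sc.nrecv l) = c₀ ∧ sc.pL l = p) ∧
          co.part (sc.nsend l) = co.part (sc.nrecv l)))
        = univ.filter (fun l => (co.part (sc.nsend l) = c₀ ∧ sc.pL l = p) ∧
          co.part (sc.nsend l) = co.part (sc.nrecv l)) := by
      ext l
      simp only [Finset.mem_filter, Finset.mem_univ, true_and]
      constructor
      · rintro ⟨⟨h1, h2⟩, h3⟩; exact ⟨⟨h3.trans h1, h2⟩, h3⟩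
      · rintro ⟨⟨h1, h2⟩, h3⟩; exact ⟨⟨h3 ▸ h1, h2⟩, h3⟩
    rw [class_sum_recv, class_sum_send]
    rw [hloc] at hin
    linarith
  · intro k
    constructor
    · exact Finset.sum_nonneg fun l _ => (hf l).1
    · exact Finset.sum_le_sum fun l _ => (hf l).2
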